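/- Let k be a field, N' < N natural numbers, P := MvPolynomial (Fin (N+1)) k and P' := MvPolynomial (Fin (N'+1)) k, with ι, π, the weight w and the initial-form ideal construction I ↦ I' as in the context. If I is a homogeneous prime ideal of P, then Ideal.map π I' = Ideal.comap ι I. (Geometrically: in the degeneration by projection, the scheme-theoretic intersection of the special fiber X' with ℙ^{N'} ⊂ ℙ^N equals the closure of the image of X = V(I) under the projection away from V(x_0,…,x_{N'}).) -/

import Mathlib

noncomputable section

/-- The weight `w` used for the degeneration by projection: `w i = 0` for
`i ≤ N'` and `w i = 1` for `i > N'`. -/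
def projWeight (N N' : ℕ) : Fin (N + 1) → ℕ := fun i => if (i : ℕ) ≤ N' then 0 else 1

/-- The `w`-initial form `in_w f` of a polynomial: the weighted homogeneous
component of `f` in degree `weightedTotalDegree w f`. -/
def initialForm (k : Type*) [Field k] (N N' : ℕ)
    (f : MvPolynomial (Fin (N + 1)) k) : MvPolynomial (Fin (N + 1)) k :=
  MvPolynomial.weightedHomogeneousComponent (projWeight N N')
    (MvPolynomial.weightedTotalDegree (projWeight N N') f) f

/-- The ideal `I'` of initial forms: it is generated by the `w`-initial forms of the
nonzero (standard-)homogeneous elements of `I`.  It defines the special fiber `X'` of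
the degeneration `𝔛 = closure(𝔾_m · X) ⊆ ℙ^N × 𝔸¹`. -/
def initialIdeal (k : Type*) [Field k] (N N' : ℕ)
    (I : Ideal (MvPolynomial (Fin (N + 1)) k)) : Ideal (MvPolynomial (Fin (N + 1)) k) :=
  Ideal.span {g | ∃ f ∈ I, f ≠ 0 ∧ (∃ n, MvPolynomial.IsHomogeneous f n) ∧
    g = initialForm k N N' f}

/-- The projection `π : k[x_0,…,x_N] → k[x_0,…,x_{N'}]`, sending `X i ↦ X i` for
`i ≤ N'` and `X i ↦ 0` for `i > N'`. -/
def projHom (k : Type*) [Field k] (N N' : ℕ) (hN : N' < N) :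
    MvPolynomial (Fin (N + 1)) k →ₐ[k] MvPolynomial (Fin (N' + 1)) k :=
  MvPolynomial.aeval fun i : Fin (N + 1) =>
    if h : (i : ℕ) ≤ N' then (MvPolynomial.X ⟨(i : ℕ), by omega⟩ :
      MvPolynomial (Fin (N' + 1)) k) else 0

/-- The inclusion `ι : k[x_0,…,x_{N'}] → k[x_0,…,x_N]` renaming variables along
`Fin (N'+1) ↪ Fin (N+1)`. -/
def inclHom (k : Type*) [Field k] (N N' : ℕ) (hN : N' < N) :
    MvPolynomial (Fin (N' + 1)) k →ₐ[k] MvPolynomial (Fin (N + 1)) k :=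
  MvPolynomial.rename (Fin.castLE (by omega : N' + 1 ≤ N + 1))

namespace DegenAux

open MvPolynomial

variable {k : Type*} [Field k] {N N' : ℕ} (hN : N' < N)

lemma proj_incl (g : MvPolynomial (Fin (N' + 1)) k) :
    projHom k N N' hN (inclHom k N N' hN g) = g := by
  have h : (projHom k N N' hN).comp (inclHom k N N' hN)
      = AlgHom.id k (MvPolynomial (Fin (N' + 1)) k) := by
    apply MvPolynomial.algHom_ext
    intro j
    have hj : ((Fin.castLE (by omega : N' + 1 ≤ N + 1) j : Fin (N + 1)) : ℕ) ≤ N' := by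
      simpa using Nat.lt_succ_iff.mp j.isLt
    simp only [AlgHom.comp_apply, inclHom, rename_X, projHom, aeval_X, AlgHom.id_apply]
    rw [dif_pos hj]
    congr 1
  calc projHom k N N' hN (inclHom k N N' hN g)
      = ((projHom k N N' hN).comp (inclHom k N N' hN)) g := rfl
    _ = g := by rw [h]; rfl

lemma incl_proj (f : MvPolynomial (Fin (N + 1)) k) :
    inclHom k N N' hN (projHom k N N' hN f)
      = MvPolynomial.weightedHomogeneousComponent (projWeight N N') 0 f := by
  classical
  have hcomp : (inclHom k N N' hN).comp (projHom k N N' hN)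
      = MvPolynomial.aeval (fun i : Fin (N + 1) =>
          if (i : ℕ) ≤ N' then (X i : MvPolynomial (Fin (N + 1)) k) else 0) := by
    apply MvPolynomial.algHom_ext
    intro i
    simp only [AlgHom.comp_apply, projHom, aeval_X]
    by_cases h : (i : ℕ) ≤ N'
    · rw [dif_pos h, if_pos h]
      simp only [inclHom, rename_X]
      congr 1
    · rw [dif_neg h, if_neg h, map_zero]
  have key : ∀ f : MvPolynomial (Fin (N + 1)) k,
      MvPolynomial.aeval (fun i : Fin (N + 1) =>
          if (i : ℕ) ≤ N' then (X i : MvPolynomial (Fin (N + 1)) k) else 0) f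
        = MvPolynomial.weightedHomogeneousComponent (projWeight N N') 0 f := by
    intro f
    induction f using MvPolynomial.induction_on' with
    | add p q hp hq => rw [map_add, map_add, hp, hq]
    | monomial m c =>
      by_cases h : Finsupp.weight (projWeight N N') m = 0
      · have hterms : ∀ i ∈ m.support, m i • projWeight N N' i = 0 := by
          rw [Finsupp.weight_apply, Finsupp.sum] at h
          exact Finset.sum_eq_zero_iff.mp h
        have hsupp : ∀ i ∈ m.support, (i : ℕ) ≤ N' := by
          intro i hi
          by_contra hle
          have h1 : projWeight N N' i = 1 := by simp [projWeight, hle]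
          have := hterms i hi
          rw [h1, smul_eq_mul, mul_one] at this
          exact Finsupp.mem_support_iff.mp hi this
        rw [(MvPolynomial.isWeightedHomogeneous_monomial (projWeight N N') m c
            h).weightedHomogeneousComponent_same]
        rw [MvPolynomial.aeval_monomial]
        rw [Finsupp.prod_congr (fun i hi => by rw [if_pos (hsupp i hi)])]
        rw [MvPolynomial.monomial_eq]
        rfl
      · rw [(MvPolynomial.isWeightedHomogeneous_monomial (projWeight N N') m c
            rfl).weightedHomogeneousComponent_ne 0 (Ne.symm h)]
        obtain ⟨i, hi, hle⟩ : ∃ i ∈ m.support, ¬ (i : ℕ) ≤ N' := by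
          by_contra hc
          push_neg at hc
          apply h
          rw [Finsupp.weight_apply, Finsupp.sum]
          refine Finset.sum_eq_zero fun i hi => ?_
          have : projWeight N N' i = 0 := by simp [projWeight, hc i hi]
          simp only [this, smul_zero]
        rw [MvPolynomial.aeval_monomial, Finsupp.prod]
        rw [Finset.prod_eq_zero hi
          (by rw [if_neg hle]; exact zero_pow (Finsupp.mem_support_iff.mp hi))]
        rw [mul_zero]
  calc inclHom k N N' hN (projHom k N N' hN f)
      = ((inclHom k N N' hN).comp (projHom k N N' hN)) f := rfl
    _ = _ := by rw [hcomp]; exact key f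

lemma wdeg_incl (g : MvPolynomial (Fin (N' + 1)) k) :
    MvPolynomial.weightedTotalDegree (projWeight N N') (inclHom k N N' hN g) = 0 := by
  apply Nat.le_zero.mp
  apply Finset.sup_le
  intro d hd
  have hcoeff : MvPolynomial.coeff d (inclHom k N N' hN g) ≠ 0 :=
    MvPolynomial.mem_support_iff.mp hd
  obtain ⟨u, hu, -⟩ := MvPolynomial.coeff_rename_ne_zero _ _ _ hcoeff
  rw [← hu, Finsupp.weight_apply,
    Finsupp.sum_mapDomain_index (h := fun i c => c • projWeight N N' i) (fun b => zero_smul ℕ _) (fun b m₁ m₂ => add_smul m₁ m₂ _)]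
  apply le_of_eq
  refine Finset.sum_eq_zero fun i hi => ?_
  have : projWeight N N' (Fin.castLE (by omega : N' + 1 ≤ N + 1) i) = 0 := by
    simp only [projWeight, Fin.coe_castLE]
    rw [if_pos (Nat.lt_succ_iff.mp i.isLt)]
  simp only [this, smul_zero]

end DegenAux

/-- **Degeneration by projection: `I' · S' = I ∩ S'`.**

If `I` is a homogeneous prime ideal of `P = k[x_0,…,x_N]`, then the image of
the initial-form ideal `I'` under `π` equals `Ideal.comap ι I`.  Geometrically,
the scheme-theoretic intersection of the special fiber `X'` with
`ℙ^{N'} ⊂ ℙ^N` equals the closure of the image of `X = V(I)` under the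
projection away from `V(x_0,…,x_{N'})`. -/
theorem degeneration_by_projection (k : Type*) [Field k] (N N' : ℕ) (hN : N' < N)
    (I : Ideal (MvPolynomial (Fin (N + 1)) k)) (hIprime : I.IsPrime)
    (hIhom : ∀ f ∈ I, ∀ n : ℕ, MvPolynomial.homogeneousComponent n f ∈ I) :
    Ideal.map (projHom k N N' hN) (initialIdeal k N N' I)
      = Ideal.comap (inclHom k N N' hN) I := by
  classical
  open MvPolynomial in
  apply le_antisymm
  · rw [Ideal.map_le_iff_le_comap]
    unfold initialIdeal
    rw [Ideal.span_le]
    rintro g ⟨f, hfI, hf0, -, rfl⟩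
    simp only [SetLike.mem_coe, Ideal.mem_comap]
    rw [DegenAux.incl_proj]
    by_cases hd : weightedTotalDegree (projWeight N N') f = 0
    · have h0 : IsWeightedHomogeneous (projWeight N N') f 0 :=
        (isWeightedHomogeneous_zero_iff_weightedTotalDegree_eq_zero).mpr hd
      rw [initialForm, hd, h0.weightedHomogeneousComponent_same,
        h0.weightedHomogeneousComponent_same]
      exact hfI
    · rw [initialForm, (weightedHomogeneousComponent_isWeightedHomogeneous
        (weightedTotalDegree (projWeight N N') f) f).weightedHomogeneousComponent_ne 0
        (Ne.symm hd)]
      exact zero_mem I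
  · intro g hg
    rw [Ideal.mem_comap] at hg
    rw [← MvPolynomial.sum_homogeneousComponent g]
    apply Ideal.sum_mem
    intro n hn
    by_cases hgn : MvPolynomial.homogeneousComponent n g = 0
    · rw [hgn]; exact zero_mem _
    set gn := MvPolynomial.homogeneousComponent n g with hgn_def
    set f := inclHom k N N' hN gn with hf_def
    have hinj : Function.Injective (inclHom k N N' hN) :=
      MvPolynomial.rename_injective _ (Fin.castLE_injective _)
    have hhom : f.IsHomogeneous n := by
      rw [hf_def, inclHom]
      exact (MvPolynomial.homogeneousComponent_isHomogeneous n g).rename_isHomogeneous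
    have hfI : f ∈ I := by
      have hsum : inclHom k N N' hN g
          = ∑ j ∈ Finset.range (g.totalDegree + 1),
              inclHom k N N' hN (MvPolynomial.homogeneousComponent j g) := by
        rw [← map_sum, MvPolynomial.sum_homogeneousComponent]
      have hcomp : MvPolynomial.homogeneousComponent n (inclHom k N N' hN g) = f := by
        rw [hsum, map_sum]
        rw [Finset.sum_congr rfl (fun j hj => MvPolynomial.homogeneousComponent_of_mem
          ((MvPolynomial.mem_homogeneousSubmodule _ _).mpr (by
            rw [inclHom]
            exact (MvPolynomial.homogeneousComponent_isHomogeneous j g).rename_isHomogeneous)))]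
        rw [Finset.sum_ite_eq, if_pos hn]
      rw [← hcomp]
      exact hIhom _ hg n
    have hf0 : f ≠ 0 := by
      intro h
      exact hgn (hinj (by rw [← hf_def, h, map_zero]))
    have hwdeg : MvPolynomial.weightedTotalDegree (projWeight N N') f = 0 :=
      DegenAux.wdeg_incl hN gn
    have hinit : initialForm k N N' f = f := by
      rw [initialForm, hwdeg]
      exact ((MvPolynomial.isWeightedHomogeneous_zero_iff_weightedTotalDegree_eq_zero).mpr
        hwdeg).weightedHomogeneousComponent_same
    have hmem : initialForm k N N' f ∈ initialIdeal k N N' I :=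
      Ideal.subset_span ⟨f, hfI, hf0, ⟨n, hhom⟩, rfl⟩
    have : gn = projHom k N N' hN (initialForm k N N' f) := by
      rw [hinit, hf_def, DegenAux.proj_incl]
    rw [this]
    exact Ideal.mem_map_of_mem _ hmem
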